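/- Let G be a graph with a fat crown decomposition (H, C, R). Then G has a P2-packing of size k if and only if G − H − C has a P2-packing of size k − |H|. -/

import Mathlib

open Finset

def P2Verts {V : Type*} [DecidableEq V] (p : V × V × V) : Finset V := {p.1, p.2.1, p.2.2}

def IsP2 {V : Type*} (G : SimpleGraph V) (p : V × V × V) : Prop :=
  G.Adj p.1 p.2.1 ∧ G.Adj p.2.1 p.2.2 ∧ p.1 ≠ p.2.2

def IsP2Packing {V : Type*} [DecidableEq V] (G : SimpleGraph V) (P : Finset (V × V × V)) : Prop :=
  (∀ p ∈ P, IsP2 G p) ∧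
  ∀ p ∈ P, ∀ q ∈ P, p ≠ q → Disjoint (P2Verts p) (P2Verts q)

def PackVerts {V : Type*} [DecidableEq V] (P : Finset (V × V × V)) : Finset V :=
  P.biUnion P2Verts

def IsMaximalP2Packing {V : Type*} [DecidableEq V] (G : SimpleGraph V)
    (P : Finset (V × V × V)) : Prop :=
  IsP2Packing G P ∧ ∀ q, IsP2 G q → ¬ Disjoint (P2Verts q) (PackVerts P)

def P2Edges {V : Type*} [DecidableEq V] (p : V × V × V) : Finset (Sym2 V) :=
  {s(p.1, p.2.1), s(p.2.1, p.2.2)}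

/-- A double crown decomposition (H, C, R) of the vertex set of G. -/
structure IsDoubleCrown {V : Type*} [DecidableEq V] (G : SimpleGraph V)
    (H C R : Finset V) : Prop where
  cover : ∀ v : V, v ∈ H ∨ v ∈ C ∨ v ∈ R
  dHC : Disjoint H C
  dHR : Disjoint H R
  dCR : Disjoint C R
  sep : ∀ c ∈ C, ∀ r ∈ R, ¬ G.Adj c r
  indep : ∀ a ∈ C, ∀ b ∈ C, ¬ G.Adj a b
  crown : ∃ C0 Cp Cpp : Finset V,
    C = C0 ∪ Cp ∪ Cpp ∧ Disjoint C0 Cp ∧ Disjoint C0 Cpp ∧ Disjoint Cp Cpp ∧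
    Cp.card = H.card ∧ Cpp.card = H.card ∧
    (∃ f : {x // x ∈ Cp} ≃ {x // x ∈ H}, ∀ x, G.Adj x.1 (f x).1) ∧
    (∃ f : {x // x ∈ Cpp} ≃ {x // x ∈ H}, ∀ x, G.Adj x.1 (f x).1)

/-- A fat crown decomposition (H, C, R) of the vertex set of G. -/
structure IsFatCrown {V : Type*} [DecidableEq V] (G : SimpleGraph V)
    (H C R : Finset V) : Prop where
  cover : ∀ v : V, v ∈ H ∨ v ∈ C ∨ v ∈ R
  dHC : Disjoint H C
  dHR : Disjoint H R
  dCR : Disjoint C R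
  sep : ∀ c ∈ C, ∀ r ∈ R, ¬ G.Adj c r
  k2s : ∀ v ∈ C, ∃ w ∈ C, G.Adj v w ∧ ∀ u ∈ C, G.Adj v u → u = w
  matching : ∃ f : {x // x ∈ H} → V, Function.Injective f ∧
    (∀ h : {x // x ∈ H}, f h ∈ C ∧ G.Adj h.1 (f h)) ∧
    (∀ h hp : {x // x ∈ H}, h ≠ hp → ¬ G.Adj (f h) (f hp))

/-- Lemma 2: with a fat crown (H,C,R), G has a P2-packing of size k iff
G - H - C (the induced subgraph on R) has one of size k - |H|. -/
theorem stmt4 {V : Type*} [DecidableEq V] (G : SimpleGraph V)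
    (H C R : Finset V) (k : ℕ) (hcrown : IsFatCrown G H C R) :
    (∃ P : Finset (V × V × V), IsP2Packing G P ∧ P.card = k) ↔
    (∃ P : Finset (V × V × V), IsP2Packing G P ∧ (∀ p ∈ P, P2Verts p ⊆ R) ∧
      P.card = k - H.card) := by

  classical
  obtain ⟨cover, dHC, dHR, dCR, sep, k2s, f, finj, fprop, fnadj⟩ := hcrown
  have packmono : ∀ (P Q : Finset (V × V × V)), Q ⊆ P → IsP2Packing G P → IsP2Packing G Q := by
    rintro P Q hs ⟨h1, h2⟩
    exact ⟨fun p hp => h1 p (hs hp), fun p hp q hq => h2 p (hs hp) q (hs hq)⟩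
  have memP2 : ∀ (p : V × V × V) (v : V), v ∈ P2Verts p ↔ v = p.1 ∨ v = p.2.1 ∨ v = p.2.2 := by
    intro p v; simp [P2Verts]
  have nbr : ∀ c ∈ C, ∀ x, G.Adj c x → x ∈ C ∨ x ∈ H := by
    intro c hc x hadj
    rcases cover x with h | h | h
    · exact Or.inr h
    · exact Or.inl h
    · exact absurd hadj (sep c hc x h)
  constructor
  · rintro ⟨P, hP, hcard⟩
    have keyC : ∀ p ∈ P, (p.1 ∈ C ∨ p.2.1 ∈ C ∨ p.2.2 ∈ C) →
        (p.1 ∈ H ∨ p.2.1 ∈ H ∨ p.2.2 ∈ H) := by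
      intro p hp hC
      obtain ⟨h12, h23, h13⟩ := hP.1 p hp
      have mid : p.2.1 ∈ C → p.1 ∈ H ∨ p.2.2 ∈ H := by
        intro hc
        rcases nbr _ hc _ h12.symm with h1C | h1H
        · rcases nbr _ hc _ h23 with h3C | h3H
          · obtain ⟨w, hwC, hadj, huniq⟩ := k2s p.2.1 hc
            exact absurd ((huniq _ h1C h12.symm).trans (huniq _ h3C h23).symm) h13
          · exact Or.inr h3H
        · exact Or.inl h1H
      rcases hC with hc | hc | hc
      · rcases nbr _ hc _ h12 with h2C | h2H
        · rcases mid h2C with h | h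
          · exact Or.inl h
          · exact Or.inr (Or.inr h)
        · exact Or.inr (Or.inl h2H)
      · rcases mid hc with h | h
        · exact Or.inl h
        · exact Or.inr (Or.inr h)
      · rcases nbr _ hc _ h23.symm with h2C | h2H
        · rcases mid h2C with h | h
          · exact Or.inl h
          · exact Or.inr (Or.inr h)
        · exact Or.inr (Or.inl h2H)
    have touchH : ∀ p ∈ P, ¬ (P2Verts p ⊆ R) → (P2Verts p ∩ H).Nonempty := by
      intro p hp hnsub
      obtain ⟨v, hv, hvR⟩ := Finset.not_subset.mp hnsub
      have hHC : p.1 ∈ H ∨ p.2.1 ∈ H ∨ p.2.2 ∈ H := by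
        rcases cover v with h | h | h
        · rcases (memP2 p v).mp hv with rfl | rfl | rfl
          · exact Or.inl h
          · exact Or.inr (Or.inl h)
          · exact Or.inr (Or.inr h)
        · apply keyC p hp
          rcases (memP2 p v).mp hv with rfl | rfl | rfl
          · exact Or.inl h
          · exact Or.inr (Or.inl h)
          · exact Or.inr (Or.inr h)
        · exact absurd h hvR
      rcases hHC with h | h | h
      · exact ⟨p.1, Finset.mem_inter.mpr ⟨(memP2 p p.1).mpr (Or.inl rfl), h⟩⟩
      · exact ⟨p.2.1, Finset.mem_inter.mpr ⟨(memP2 p p.2.1).mpr (Or.inr (Or.inl rfl)), h⟩⟩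
      · exact ⟨p.2.2, Finset.mem_inter.mpr ⟨(memP2 p p.2.2).mpr (Or.inr (Or.inr rfl)), h⟩⟩
    set Q := P.filter (fun p => P2Verts p ⊆ R) with hQdef
    have hQP : Q ⊆ P := Finset.filter_subset _ _
    -- card of P \ Q
    have hchoice : ∀ p ∈ P \ Q, ((P2Verts p ∩ H).Nonempty) := by
      intro p hp
      rw [Finset.mem_sdiff, hQdef, Finset.mem_filter] at hp
      exact touchH p hp.1 (fun h => hp.2 ⟨hp.1, h⟩)
    set g : (V × V × V) → V := fun p =>
      if h : (P2Verts p ∩ H).Nonempty then h.choose else p.1 with hgdef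
    have hgmem : ∀ p ∈ P \ Q, g p ∈ P2Verts p ∩ H := by
      intro p hp
      have h := hchoice p hp
      simp only [hgdef, dif_pos h]
      exact h.choose_spec
    have hcardPQ : (P \ Q).card ≤ H.card := by
      apply Finset.card_le_card_of_injOn g
      · intro p hp; exact (Finset.mem_inter.mp (hgmem p hp)).2
      · intro p hp q hq heq
        by_contra hne
        have h1 := (Finset.mem_inter.mp (hgmem p hp)).1
        have h2 := (Finset.mem_inter.mp (hgmem q hq)).1
        rw [heq] at h1
        exact Finset.disjoint_left.mp
          (hP.2 p (Finset.mem_sdiff.mp hp).1 q (Finset.mem_sdiff.mp hq).1 hne) h1 h2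
    have hQcard : k - H.card ≤ Q.card := by
      have := Finset.card_sdiff_add_card_eq_card hQP
      omega
    obtain ⟨Q', hQ'Q, hQ'card⟩ := Finset.exists_subset_card_eq hQcard
    refine ⟨Q', packmono P Q' (hQ'Q.trans hQP) hP, ?_, hQ'card⟩
    intro p hp
    exact (Finset.mem_filter.mp (hQ'Q hp)).2
  · rintro ⟨P, hP, hPR, hcard⟩
    have gex : ∀ v (h : v ∈ C), ∃ w, w ∈ C ∧ G.Adj v w ∧ ∀ u ∈ C, G.Adj v u → u = w := by
      intro v h
      obtain ⟨w, hw1, hw2, hw3⟩ := k2s v h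
      exact ⟨w, hw1, hw2, hw3⟩
    set g : V → V := fun v => if h : v ∈ C then (gex v h).choose else v with hgdef
    have gspec : ∀ v (h : v ∈ C), g v ∈ C ∧ G.Adj v (g v) ∧ ∀ u ∈ C, G.Adj v u → u = g v := by
      intro v h
      simp only [hgdef, dif_pos h]
      exact (gex v h).choose_spec
    have hHC : ∀ a ∈ H, ∀ b ∈ C, a ≠ b := by
      intro a ha b hb h
      subst h
      exact Finset.disjoint_left.mp dHC ha hb
    have key : ∀ (h h' : {x // x ∈ H}), h ≠ h' → f h ≠ g (f h') := by
      intro h h' hne heq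
      have hadj : G.Adj (f h') (g (f h')) := (gspec (f h') (fprop h').1).2.1
      rw [← heq] at hadj
      exact fnadj h' h (fun e => hne e.symm) hadj
    have key2 : ∀ (h h' : {x // x ∈ H}), h ≠ h' → g (f h) ≠ g (f h') := by
      intro h h' hne heq
      obtain ⟨hwC, hadj, _⟩ := gspec (f h) (fprop h).1
      obtain ⟨_, _, huniq'⟩ := gspec (g (f h)) hwC
      have e1 : f h = g (g (f h)) := huniq' (f h) (fprop h).1 hadj.symm
      have hadj' : G.Adj (g (f h')) (f h') := (gspec (f h') (fprop h').1).2.1.symm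
      rw [← heq] at hadj'
      have e2 : f h' = g (g (f h)) := huniq' (f h') (fprop h').1 hadj'
      exact hne (finj (e1.trans e2.symm))
    set t : {x // x ∈ H} → V × V × V := fun h => ((h : V), f h, g (f h)) with htdef
    set S : Finset (V × V × V) := H.attach.image t with hSdef
    have hmemS : ∀ p ∈ S, ∃ h : {x // x ∈ H}, p = t h := by
      intro p hp
      obtain ⟨h, _, heq⟩ := Finset.mem_image.mp hp
      exact ⟨h, heq.symm⟩
    have hStriple : ∀ h : {x // x ∈ H}, IsP2 G (t h) := by
      intro h
      refine ⟨(fprop h).2, (gspec (f h) (fprop h).1).2.1, ?_⟩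
      exact hHC _ h.2 _ (gspec (f h) (fprop h).1).1
    have hSvertHC : ∀ (h : {x // x ∈ H}) (v : V), v ∈ P2Verts (t h) → v ∈ H ∨ v ∈ C := by
      intro h v hv
      rcases (memP2 (t h) v).mp hv with rfl | rfl | rfl
      · exact Or.inl h.2
      · exact Or.inr (fprop h).1
      · exact Or.inr (gspec (f h) (fprop h).1).1
    have hSdisj : ∀ (h h' : {x // x ∈ H}), h ≠ h' →
        Disjoint (P2Verts (t h)) (P2Verts (t h')) := by
      intro h h' hne
      rw [Finset.disjoint_left]
      intro v hv hv'
      have hCh : ∀ x : {x // x ∈ H}, f x ∈ C := fun x => (fprop x).1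
      have hCg : ∀ x : {x // x ∈ H}, g (f x) ∈ C := fun x => (gspec (f x) (fprop x).1).1
      rcases (memP2 (t h) v).mp hv with e1 | e1 | e1 <;>
          rcases (memP2 (t h') v).mp hv' with e2 | e2 | e2 <;>
          have e := e1.symm.trans e2 <;>
          first
          | exact hne (Subtype.ext e)
          | exact hHC _ h.2 _ (hCh h') e
          | exact hHC _ h.2 _ (hCg h') e
          | exact hHC _ h'.2 _ (hCh h) e.symm
          | exact hne (finj e)
          | exact key h h' hne e
          | exact hHC _ h'.2 _ (hCg h) e.symm
          | exact key h' h (fun x => hne x.symm) e.symm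
          | exact key2 h h' hne e
    have hPSdisjV : ∀ p ∈ P, ∀ (h : {x // x ∈ H}), Disjoint (P2Verts p) (P2Verts (t h)) := by
      intro p hp h
      rw [Finset.disjoint_left]
      intro v hv hv'
      have hvR : v ∈ R := hPR p hp hv
      rcases hSvertHC h v hv' with hH | hC
      · exact Finset.disjoint_left.mp dHR hH hvR
      · exact Finset.disjoint_left.mp dCR hC hvR
    have hPSdisj : Disjoint P S := by
      rw [Finset.disjoint_left]
      intro p hpP hpS
      obtain ⟨h, rfl⟩ := hmemS p hpS
      have : (h : V) ∈ R := hPR _ hpP ((memP2 (t h) (h : V)).mpr (Or.inl rfl))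
      exact Finset.disjoint_left.mp dHR h.2 this
    have hScard : S.card = H.card := by
      rw [hSdef, Finset.card_image_of_injOn, Finset.card_attach]
      intro a _ b _ hab
      exact Subtype.ext (congrArg Prod.fst hab)
    have hpack : IsP2Packing G (P ∪ S) := by
      constructor
      · intro p hp
        rcases Finset.mem_union.mp hp with h | h
        · exact hP.1 p h
        · obtain ⟨x, rfl⟩ := hmemS p h
          exact hStriple x
      · intro p hp q hq hne
        rcases Finset.mem_union.mp hp with h1 | h1 <;> rcases Finset.mem_union.mp hq with h2 | h2
        · exact hP.2 p h1 q h2 hne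
        · obtain ⟨x, rfl⟩ := hmemS q h2
          exact hPSdisjV p h1 x
        · obtain ⟨x, rfl⟩ := hmemS p h1
          exact (hPSdisjV q h2 x).symm
        · obtain ⟨x, rfl⟩ := hmemS p h1
          obtain ⟨y, rfl⟩ := hmemS q h2
          refine hSdisj x y ?_
          rintro rfl; exact hne rfl
    have hcardU : (P ∪ S).card = (k - H.card) + H.card := by
      rw [Finset.card_union_of_disjoint hPSdisj, hcard, hScard]
    have hk : k ≤ (P ∪ S).card := by
      rw [hcardU]; omega
    obtain ⟨P', hP'sub, hP'card⟩ := Finset.exists_subset_card_eq hk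
    exact ⟨P', packmono _ _ hP'sub hpack, hP'card⟩
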